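/- arXiv:2605.03307 — 4 statements merged into one kernel-verified Lean document; each statement's English description precedes it below -/
import Mathlib

section
/- In the default propagation algorithm starting from borrower u with residual loss ℓ₀ = max{0, P(u) − G(u)}, at every step of the upward loop the current residual loss ℓ at node j satisfies ℓ ≤ R(j), where R is the required-delegation function. Consequently, if the current state satisfies D(p(j), j) ≥ R(j) for every non-seed j on the sponsor path, then every delegation reduction D(p(j),j) ← D(p(j),j) − ℓ performed by the algorithm is feasible (never makes the delegation negative). -/
open Finset

/-- Default propagation is well-defined: along the sponsor path from the
borrower, the current residual loss at each node is bounded by the required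
delegation there, so every delegation reduction performed by the algorithm is
feasible. -/
theorem default_propagation_feasible
    {U : Type*} [Fintype U] [DecidableEq U]
    (S : Finset U) (p : U → U)
    (P G R : U → ℝ) (D : U → U → ℝ)
    (hP : ∀ u, 0 ≤ P u) (hG : ∀ u, 0 ≤ G u)
    (hDpos : ∀ a b, 0 ≤ D a b)
    (hR : ∀ v, R v = max 0
      (P v + (∑ w ∈ univ.filter (fun w => w ∉ S ∧ p w = v), R w) - G v))
    (u : U) (n : ℕ) (path : ℕ → U)
    (hpath0 : path 0 = u)
    (hpath : ∀ k < n, path k ∉ S ∧ p (path k) = path (k + 1))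
    (ℓ : ℕ → ℝ)
    (hℓ0 : ℓ 0 = P u - min (G u) (P u))
    (hℓ : ∀ k, ℓ (k + 1) = ℓ k - min (G (path (k + 1))) (ℓ k)) :
    (∀ k ≤ n, ℓ k ≤ R (path k)) ∧
    ((∀ k < n, R (path k) ≤ D (p (path k)) (path k)) →
      ∀ k < n, 0 ≤ D (p (path k)) (path k) - ℓ k) := by
  have hRnn : ∀ v, 0 ≤ R v := fun v => (hR v) ▸ le_max_left 0 _
  have main : ∀ k ≤ n, ℓ k ≤ R (path k) := by
    intro k
    induction k with
    | zero =>
      intro _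
      rw [hℓ0, hpath0, hR u]
      have hsum : 0 ≤ ∑ w ∈ univ.filter (fun w => w ∉ S ∧ p w = u), R w :=
        Finset.sum_nonneg fun w _ => hRnn w
      rcases le_total (G u) (P u) with h | h
      · rw [min_eq_left h]
        have : P u - G u ≤ P u + (∑ w ∈ univ.filter (fun w => w ∉ S ∧ p w = u), R w) - G u := by
          linarith
        exact le_trans this (le_max_right _ _)
      · rw [min_eq_right h]
        simpa using le_max_left 0 _
    | succ k ih =>
      intro hk
      have hkn : k < n := Nat.lt_of_succ_le hk
      obtain ⟨hS, hp⟩ := hpath k hkn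
      have hmem : path k ∈ univ.filter (fun w => w ∉ S ∧ p w = path (k + 1)) := by
        simp [hS, hp]
      have hsum : R (path k) ≤ ∑ w ∈ univ.filter (fun w => w ∉ S ∧ p w = path (k + 1)), R w :=
        Finset.single_le_sum (fun w _ => hRnn w) hmem
      rw [hℓ k]
      rcases le_total (ℓ k) (G (path (k + 1))) with h | h
      · rw [min_eq_right h]
        simpa using hRnn (path (k + 1))
      · rw [min_eq_left h]
        have h1 : ℓ k ≤ R (path k) := ih (le_of_lt hkn)
        have h2 : P (path (k + 1)) +
            (∑ w ∈ univ.filter (fun w => w ∉ S ∧ p w = path (k + 1)), R w)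
            - G (path (k + 1)) ≤ R (path (k + 1)) :=
          (hR (path (k + 1))) ▸ le_max_right _ _
        have := hP (path (k + 1))
        linarith
  refine ⟨main, fun hD k hk => ?_⟩
  have h1 := main k (le_of_lt hk)
  have h2 := hD k hk
  linarith
end

section
/- Consider a single default-propagation step at an upstream node v (not the borrower) on the sponsor path: incoming loss ℓ reduces the delegation D(v,j) on the path edge to its child j by ℓ, burns A(v) = min{G(v), ℓ} from v's earned credit, and passes ℓ' = ℓ − A(v) upward (reducing v's incoming delegation by ℓ' if v is a non-seed, or its base budget by ℓ' if v is a seed). Then v's budget falls by exactly ℓ, its total outgoing delegation falls by exactly ℓ, and therefore v's credit limit L(v) = Budget(v) − Σ_{(v→w)} D(v,w) is unchanged. -/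
open Finset

/-- A single default-propagation step at an upstream node `v`: its budget and
its total outgoing delegation both fall by exactly `ℓ`, so its credit limit is
unchanged. -/
theorem step_preserves_credit_limit
    {U : Type*} [Fintype U] [DecidableEq U]
    (S : Finset U) (p : U → U)
    (G G' : U → ℝ) (D D' : U → U → ℝ)
    (v j : U) (hj : j ∉ S) (hpj : p j = v)
    (ℓ A : ℝ) (hℓ : 0 ≤ ℓ) (hA : A = min (G v) ℓ)
    (hG' : G' v = G v - A)
    (hD'edge : D' v j = D v j - ℓ)
    (hD'other : ∀ w, w ≠ j → D' v w = D v w)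
    (Din Din' B0v B0v' : ℝ)
    (hin : v ∉ S → Din' = Din - (ℓ - A))
    (hin' : v ∈ S → B0v' = B0v - (ℓ - A))
    (Budget Budget' : ℝ)
    (hB : Budget = if v ∈ S then B0v + G v else Din + G v)
    (hB' : Budget' = if v ∈ S then B0v' + G' v else Din' + G' v) :
    Budget' - Budget = -ℓ ∧
    ((∑ w ∈ univ.filter (fun w => w ∉ S ∧ p w = v), D' v w)
      - ∑ w ∈ univ.filter (fun w => w ∉ S ∧ p w = v), D v w) = -ℓ ∧
    Budget' - (∑ w ∈ univ.filter (fun w => w ∉ S ∧ p w = v), D' v w)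
      = Budget - ∑ w ∈ univ.filter (fun w => w ∉ S ∧ p w = v), D v w := by
  have hBdiff : Budget' - Budget = -ℓ := by
    by_cases hv : v ∈ S
    · rw [hB, hB', if_pos hv, if_pos hv, hin' hv, hG']; ring
    · rw [hB, hB', if_neg hv, if_neg hv, hin hv, hG']; ring
  have hjmem : j ∈ univ.filter (fun w => w ∉ S ∧ p w = v) := by
    simp [hj, hpj]
  have hsum : ((∑ w ∈ univ.filter (fun w => w ∉ S ∧ p w = v), D' v w)
      - ∑ w ∈ univ.filter (fun w => w ∉ S ∧ p w = v), D v w) = -ℓ := by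
    rw [← Finset.sum_sub_distrib]
    rw [Finset.sum_eq_single j]
    · rw [hD'edge]; ring
    · intro w _ hw; rw [hD'other w hw]; ring
    · intro h; exact absurd hjmem h
  exact ⟨hBdiff, hsum, by linarith⟩
end

section
/- For any node v in the sponsor forest, R(v) ≥ max{0, (Σ_{u in subtree of v} P(u)) − (Σ_{u in subtree of v} G(u))}: the required delegation into v is at least the total principal in v's subtree minus the total earned credit in v's subtree (when positive). -/
open Finset

/-- Lower bound on required delegation: `R v` is at least total subtree
principal minus total subtree earned credit, when positive. -/
theorem required_delegation_subtree_bound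
    {U : Type*} [Fintype U] [DecidableEq U]
    (S : Finset U) (p : U → U)
    (hwf : WellFounded (fun a b : U => a ∉ S ∧ p a = b))
    (P G R : U → ℝ)
    (hP : ∀ u, 0 ≤ P u) (hG : ∀ u, 0 ≤ G u)
    (hR : ∀ v, R v = max 0
      (P v + (∑ w ∈ univ.filter (fun w => w ∉ S ∧ p w = v), R w) - G v))
    (subtree : U → Finset U)
    (hsub : ∀ v u, u ∈ subtree v ↔
      Relation.ReflTransGen (fun a b : U => a ∉ S ∧ p a = b) u v)
    (v : U) :
    max 0 ((∑ u ∈ subtree v, P u) - ∑ u ∈ subtree v, G u) ≤ R v := by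
  set r : U → U → Prop := fun a b : U => a ∉ S ∧ p a = b with hr
  have hRU : Relator.RightUnique r := by
    rintro a b c ⟨_, rfl⟩ ⟨_, rfl⟩; rfl
  have hirr : ∀ a : U, ¬ Relation.TransGen r a a :=
    fun a => (hwf.transGen).isIrrefl.irrefl a
  -- no vertex is in the subtree of any of its children
  have hnotself : ∀ v w : U, r w v → v ∉ subtree w := by
    intro v w hwv hv
    exact hirr v (Relation.TransGen.tail' ((hsub w v).1 hv) hwv)
  -- subtree decomposition
  have hdecomp : ∀ v : U, subtree v =
      insert v ((univ.filter (fun w => r w v)).biUnion subtree) := by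
    intro v
    ext u
    simp only [mem_insert, mem_biUnion, mem_filter, mem_univ, true_and, hsub]
    constructor
    · intro h
      rcases Relation.ReflTransGen.cases_tail h with h | ⟨c, hc1, hc2⟩
      · exact Or.inl h.symm
      · exact Or.inr ⟨c, hc2, hc1⟩
    · rintro (rfl | ⟨w, hw1, hw2⟩)
      · exact Relation.ReflTransGen.refl
      · exact hw2.tail hw1
  -- disjointness of children subtrees
  have hdisj : ∀ v : U, Set.PairwiseDisjoint
      ↑(univ.filter (fun w => r w v)) subtree := by
    intro v a ha b hb hab
    simp only [coe_filter, Set.mem_setOf_eq, mem_univ, true_and] at ha hb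
    refine Finset.disjoint_left.2 fun u hua hub => ?_
    have h1 := (hsub a u).1 hua
    have h2 := (hsub b u).1 hub
    have key : ∀ x y : U, r x v → r y v → x ≠ y →
        ¬ Relation.ReflTransGen r x y := by
      intro x y hx hy hxy hxyRT
      rcases Relation.ReflTransGen.cases_head hxyRT with h | ⟨c, hc1, hc2⟩
      · exact hxy h
      · have hcv : c = v := hRU hc1 hx
        exact hirr v (Relation.TransGen.tail' (hcv ▸ hc2) hy)
    rcases Relation.ReflTransGen.total_of_right_unique hRU h1 h2 with h | h
    · exact key a b ha hb hab h
    · exact key b a hb ha hab.symm h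
  -- v not in any child's subtree
  have hvnot : ∀ v : U, v ∉ (univ.filter (fun w => r w v)).biUnion subtree := by
    intro v hv
    rcases mem_biUnion.1 hv with ⟨w, hw, hvw⟩
    exact hnotself v w (mem_filter.1 hw).2 hvw
  -- sums over the subtree split
  have hsum : ∀ (v : U) (f : U → ℝ), (∑ u ∈ subtree v, f u) =
      f v + ∑ w ∈ univ.filter (fun w => r w v), ∑ u ∈ subtree w, f u := by
    intro v f
    rw [hdecomp v, Finset.sum_insert (hvnot v),
      Finset.sum_biUnion (hdisj v)]
  -- main induction
  induction v using hwf.induction with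
  | _ v IH =>
    have hchild : ∀ w ∈ univ.filter (fun w => r w v),
        max 0 ((∑ u ∈ subtree w, P u) - ∑ u ∈ subtree w, G u) ≤ R w := by
      intro w hw
      exact IH w (mem_filter.1 hw).2
    rw [hR v, hsum v P, hsum v G]
    apply max_le (le_max_left _ _)
    refine le_max_of_le_right ?_
    have : (∑ w ∈ univ.filter (fun w => r w v),
        ((∑ u ∈ subtree w, P u) - ∑ u ∈ subtree w, G u)) ≤
        ∑ w ∈ univ.filter (fun w => r w v), R w :=
      Finset.sum_le_sum fun w hw => le_trans (le_max_right _ _) (hchild w hw)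
    rw [Finset.sum_sub_distrib] at this
    linarith
end

section
/- If two non-seed accounts v₁ and v₂ share the same sponsor u, then splitting a single delegation D(u,v) = c into D(u,v₁) = c₁ and D(u,v₂) = c₂ with c₁ + c₂ = c leaves aggregate credit capacity Σ_w L(w) unchanged; creating an extra pseudonym funded by splitting an existing delegation cannot increase total borrowing capacity. -/
open Finset

lemma cap_total {V : Type*} [Fintype V] [DecidableEq V]
    (S : Finset V) (p : V → V) (B0 G : V → ℝ) (D : V → V → ℝ)
    (Budget L : V → ℝ)
    (hBS : ∀ s ∈ S, Budget s = B0 s + G s)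
    (hBN : ∀ w ∉ S, Budget w = D (p w) w + G w)
    (hL : ∀ w, L w = Budget w -
      ∑ x ∈ univ.filter (fun x => x ∉ S ∧ p x = w), D w x) :
    ∑ w, L w = ∑ s ∈ S, B0 s + ∑ w, G w := by
  have hfw : ∀ w : V, ∑ x ∈ univ.filter (fun x => x ∉ S ∧ p x = w), D w x
      = ∑ x ∈ (univ.filter (fun x => x ∉ S)).filter (fun x => p x = w),
          D (p x) x := by
    intro w
    rw [filter_filter]
    exact sum_congr rfl fun x hx => by
      simp only [mem_filter] at hx; rw [hx.2.2]
  have hfib : ∑ w : V, ∑ x ∈ univ.filter (fun x => x ∉ S ∧ p x = w), D w x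
      = ∑ x ∈ univ.filter (fun x => x ∉ S), D (p x) x := by
    simp_rw [hfw]
    exact sum_fiberwise _ _ _
  have hU : ∀ f : V → ℝ, ∑ w, f w
      = ∑ w ∈ S, f w + ∑ w ∈ univ.filter (fun x => x ∉ S), f w := by
    intro f
    rw [← sum_filter_add_sum_filter_not univ (fun x => x ∈ S) f]
    congr 2
    ext x; simp
  simp_rw [hL]
  rw [sum_sub_distrib, hfib, hU Budget, hU G,
    sum_congr rfl hBS, sum_congr rfl (fun w hw => hBN w (by simpa using (mem_filter.mp hw).2)),
    sum_add_distrib, sum_add_distrib]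
  ring


/-- Sybil splitting: funding a fresh pseudonym by splitting an existing
delegation `D u v = c` into `c₁ + c₂ = c` leaves aggregate credit capacity
unchanged. -/
theorem sybil_split_conserves_capacity
    {U : Type*} [Fintype U] [DecidableEq U]
    (S : Finset U) (p : U → U)
    (B0 G : U → ℝ) (D : U → U → ℝ)
    (hB0 : ∀ s ∈ S, 0 ≤ B0 s) (hG : ∀ w, 0 ≤ G w)
    (v u : U) (hv : v ∉ S) (hpv : p v = u)
    (c c₁ c₂ : ℝ) (hc : D u v = c) (hc₁ : 0 ≤ c₁) (hc₂ : 0 ≤ c₂)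
    (hsplit : c₁ + c₂ = c)
    -- post-split state on `U ⊕ Unit`, where `Sum.inr ()` is the fresh pseudonym
    (S' : Finset (U ⊕ Unit)) (p' : U ⊕ Unit → U ⊕ Unit)
    (B0' G' : U ⊕ Unit → ℝ) (D' : U ⊕ Unit → U ⊕ Unit → ℝ)
    (hS' : ∀ x, x ∈ S' ↔ ∃ s ∈ S, x = Sum.inl s)
    (hp'l : ∀ w : U, p' (Sum.inl w) = Sum.inl (p w))
    (hp'r : p' (Sum.inr ()) = Sum.inl u)
    (hG'l : ∀ w : U, G' (Sum.inl w) = G w)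
    (hG'r : G' (Sum.inr ()) = 0)
    (hB0' : ∀ w : U, B0' (Sum.inl w) = B0 w)
    (hD'v : D' (Sum.inl u) (Sum.inl v) = c₁)
    (hD'new : D' (Sum.inl u) (Sum.inr ()) = c₂)
    (hD'other : ∀ a b : U, ¬(a = u ∧ b = v) →
      D' (Sum.inl a) (Sum.inl b) = D a b)
    (hD'nonew : ∀ x : U ⊕ Unit, x ≠ Sum.inl u → D' x (Sum.inr ()) = 0)
    (Budget L : U → ℝ) (Budget' L' : U ⊕ Unit → ℝ)
    (hBS : ∀ s ∈ S, Budget s = B0 s + G s)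
    (hBN : ∀ w ∉ S, Budget w = D (p w) w + G w)
    (hL : ∀ w, L w = Budget w -
      ∑ x ∈ univ.filter (fun x => x ∉ S ∧ p x = w), D w x)
    (hBS' : ∀ s ∈ S', Budget' s = B0' s + G' s)
    (hBN' : ∀ w ∉ S', Budget' w = D' (p' w) w + G' w)
    (hL' : ∀ w, L' w = Budget' w -
      ∑ x ∈ univ.filter (fun x => x ∉ S' ∧ p' x = w), D' w x) :
    ∑ w, L' w = ∑ w, L w := by

  have hS'eq : S' = S.image Sum.inl := by
    ext x; rw [hS']; simp [eq_comm]
  rw [cap_total S' p' B0' G' D' Budget' L' hBS' hBN' hL',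
      cap_total S p B0 G D Budget L hBS hBN hL]
  congr 1
  · rw [hS'eq, sum_image (fun a _ b _ h => Sum.inl_injective h)]
    exact sum_congr rfl fun s _ => hB0' s
  · rw [Fintype.sum_sum_type]
    simp [hG'l, hG'r]
end
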